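/- arXiv:2503.20329 — 3 statements merged into one kernel-verified Lean document; each statement's English description precedes it below -/
import Mathlib

section
/- Let G be a connected finite simple graph and let A be an edge subset of minimum cardinality among those satisfying y_G(A) = y_G. Then for any k ≥ 2 distinct connected components F_1, F_2, …, F_k of G − A, the set E(F_1, …, F_k) of edges of G joining vertices lying in two distinct components among F_1, …, F_k satisfies |E(F_1, …, F_k)| ≤ 2k − 3; in particular, |E(F_i, F_j)| ≤ 1 for all 1 ≤ i < j ≤ k. -/
open SimpleGraph

/-- The number of connected components of a graph. -/
noncomputable def numComp {V : Type*} (G : SimpleGraph V) : ℕ :=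
  Nat.card G.ConnectedComponent

/-- `y_G(A) = 2 c(G - A) - |A| - 1`. -/
noncomputable def yVal {V : Type*} (G : SimpleGraph V) (A : Set (Sym2 V)) : ℤ :=
  2 * (numComp (G.deleteEdges A) : ℤ) - (A.ncard : ℤ) - 1

/-- `y_G = max_{A ⊆ E(G)} y_G(A)`. -/
noncomputable def yMax {V : Type*} (G : SimpleGraph V) : ℤ :=
  sSup { y : ℤ | ∃ A ⊆ G.edgeSet, yVal G A = y }


lemma yVal_le_yMax {V : Type*} [Finite V] (G : SimpleGraph V) (B : Set (Sym2 V))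
    (hB : B ⊆ G.edgeSet) : yVal G B ≤ yMax G := by
  apply le_csSup
  · exact Set.Finite.bddAbove ((Set.finite_range (yVal G)).subset
      (by rintro y ⟨C, -, rfl⟩; exact Set.mem_range_self C))
  · exact ⟨B, hB, rfl⟩

lemma key {V : Type*} [Finite V] (G : SimpleGraph V)
    (A : Set (Sym2 V)) (hA : A ⊆ G.edgeSet) (hy : yMax G = yVal G A)
    (hmin : ∀ B ⊆ G.edgeSet, yMax G = yVal G B → A.ncard ≤ B.ncard)
    (k : ℕ) (hk : 2 ≤ k)
    (F : Fin k → (G.deleteEdges A).ConnectedComponent) (hF : Function.Injective F) :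
    ({e : Sym2 V | ∃ i j : Fin k, i ≠ j ∧
        ∃ u ∈ (F i).supp, ∃ v ∈ (F j).supp, G.Adj u v ∧ e = s(u, v)}.ncard ≤ 2 * k - 3) := by
  set X := {e : Sym2 V | ∃ i j : Fin k, i ≠ j ∧
      ∃ u ∈ (F i).supp, ∃ v ∈ (F j).supp, G.Adj u v ∧ e = s(u, v)} with hX
  by_contra hcon
  push_neg at hcon
  obtain ⟨j0, hj0⟩ : ∃ j0 : Fin k, True := ⟨⟨0, by omega⟩, trivial⟩
  -- X ⊆ A
  have hXA : X ⊆ A := by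
    rintro e ⟨i, j, hij, u, hu, v, hv, hadj, rfl⟩
    by_contra he
    have : (G.deleteEdges A).Adj u v := by
      rw [deleteEdges_adj]; exact ⟨hadj, he⟩
    have : F i = F j := by
      rw [ConnectedComponent.mem_supp_iff] at hu hv
      rw [← hu, ← hv]
      exact ConnectedComponent.sound this.reachable
    exact hij (hF this)
  set B := A \ X with hB
  have hBsub : B ⊆ G.edgeSet := fun e he => hA he.1
  have hle : G.deleteEdges A ≤ G.deleteEdges B := deleteEdges_anti Set.diff_subset
  set ψ : (G.deleteEdges A).ConnectedComponent → (G.deleteEdges B).ConnectedComponent :=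
    ConnectedComponent.map (Hom.ofLE hle) with hψ
  -- key reachability lemma
  have L : ∀ u v : V, (G.deleteEdges B).Reachable u v →
      (G.deleteEdges A).Reachable u v ∨
      ((G.deleteEdges A).connectedComponentMk u ∈ Set.range F ∧
       (G.deleteEdges A).connectedComponentMk v ∈ Set.range F) := by
    intro u v ⟨p⟩
    induction p with
    | nil => exact Or.inl (Reachable.refl _)
    | @cons a b c hab p ih =>
      rw [deleteEdges_adj] at hab
      by_cases hmem : s(a, b) ∈ A
      · -- edge in A \ B, i.e. in X
        have hX' : s(a, b) ∈ X := by
          by_contra h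
          exact hab.2 ⟨hmem, h⟩
        obtain ⟨i, j, hij, u', hu', v', hv', hadj, heq⟩ := hX'
        rw [ConnectedComponent.mem_supp_iff] at hu' hv'
        have hab' : ((G.deleteEdges A).connectedComponentMk a ∈ Set.range F ∧
            (G.deleteEdges A).connectedComponentMk b ∈ Set.range F) := by
          rw [Sym2.eq_iff] at heq
          rcases heq with ⟨h1, h2⟩ | ⟨h1, h2⟩
          · subst h1; subst h2; exact ⟨⟨i, hu'.symm⟩, ⟨j, hv'.symm⟩⟩
          · subst h1; subst h2; exact ⟨⟨j, hv'.symm⟩, ⟨i, hu'.symm⟩⟩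
        rcases ih with hr | ⟨hb, hc⟩
        · refine Or.inr ⟨hab'.1, ?_⟩
          have : (G.deleteEdges A).connectedComponentMk b =
              (G.deleteEdges A).connectedComponentMk c := ConnectedComponent.sound hr
          exact this ▸ hab'.2
        · exact Or.inr ⟨hab'.1, hc⟩
      · -- edge in G - A
        have hadjA : (G.deleteEdges A).Adj a b := by
          rw [deleteEdges_adj]; exact ⟨hab.1, hmem⟩
        rcases ih with hr | ⟨hb, hc⟩
        · exact Or.inl (hadjA.reachable.trans hr)
        · refine Or.inr ⟨?_, hc⟩
          have : (G.deleteEdges A).connectedComponentMk a =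
              (G.deleteEdges A).connectedComponentMk b :=
            ConnectedComponent.sound hadjA.reachable
          exact this ▸ hb
  set T : Set (G.deleteEdges A).ConnectedComponent :=
    insert (F j0) (Set.range F)ᶜ with hT
  have hinj : Set.InjOn ψ T := by
    intro C hC D hD hCD
    obtain ⟨u, rfl⟩ := C.exists_rep
    obtain ⟨v, rfl⟩ := D.exists_rep
    have hCD' : (G.deleteEdges B).connectedComponentMk u =
        (G.deleteEdges B).connectedComponentMk v := hCD
    have hreach : (G.deleteEdges B).Reachable u v := ConnectedComponent.eq.mp hCD'
    rcases L u v hreach with hr | ⟨hu, hv⟩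
    · exact ConnectedComponent.sound hr
    · have h1 : (G.deleteEdges A).connectedComponentMk u = F j0 := by
        rcases hC with h | h
        · exact h
        · exact absurd hu h
      have h2 : (G.deleteEdges A).connectedComponentMk v = F j0 := by
        rcases hD with h | h
        · exact h
        · exact absurd hv h
      exact h1.trans h2.symm
  -- cardinality facts
  have hrange : (Set.range F).ncard = k := by
    rw [← Nat.card_coe_set_eq, Nat.card_range_of_injective hF, Nat.card_eq_fintype_card,
      Fintype.card_fin]
  have hcompl := Set.ncard_add_ncard_compl (Set.range F) (Set.toFinite _) (Set.toFinite _)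
  have hnc : numComp (G.deleteEdges A) = Nat.card (G.deleteEdges A).ConnectedComponent := rfl
  have hTcard : T.ncard = (numComp (G.deleteEdges A) - k) + 1 := by
    have h0 : F j0 ∉ (Set.range F)ᶜ := by simp [Set.mem_range_self]
    rw [Set.ncard_insert_of_notMem h0 (Set.toFinite _)]
    omega
  have hkn : k ≤ numComp (G.deleteEdges A) := by omega
  have hTle : T.ncard ≤ numComp (G.deleteEdges B) := by
    calc T.ncard = (ψ '' T).ncard := (Set.ncard_image_of_injOn hinj).symm
    _ ≤ (Set.univ : Set (G.deleteEdges B).ConnectedComponent).ncard :=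
        Set.ncard_le_ncard (Set.subset_univ _) (Set.toFinite _)
    _ = numComp (G.deleteEdges B) := Set.ncard_univ _
  -- numbers
  set m := X.ncard with hm
  have hmA : m ≤ A.ncard := Set.ncard_le_ncard hXA (Set.toFinite _)
  have hBcard : B.ncard = A.ncard - m := Set.ncard_diff hXA (Set.toFinite _)
  have hm2 : 2 * k ≤ m + 2 := by omega
  -- yVal comparison
  have hyB : yVal G A ≤ yVal G B := by
    unfold yVal
    rw [hBcard, Nat.cast_sub hmA]
    have h1 : (numComp (G.deleteEdges A) : ℤ) - k + 1 ≤ numComp (G.deleteEdges B) := by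
      have h3 : ((numComp (G.deleteEdges A) - k + 1 : ℕ) : ℤ) ≤
          (numComp (G.deleteEdges B) : ℤ) := by exact_mod_cast hTcard ▸ hTle
      push_cast [Nat.cast_sub hkn] at h3
      linarith
    have h2 : (2 * k : ℤ) ≤ m + 2 := by exact_mod_cast hm2
    linarith
  have hBmax : yMax G = yVal G B :=
    le_antisymm (hy ▸ hyB) (yVal_le_yMax G B hBsub)
  have := hmin B hBsub hBmax
  rw [hBcard] at this
  omega
/-- If `A` is an edge subset of minimum cardinality attaining `y_G`, then for any `k ≥ 2`
distinct components `F₁, …, F_k` of `G - A`, `|E(F₁, …, F_k)| ≤ 2k - 3`;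
in particular `|E(F_i, F_j)| ≤ 1` for `i ≠ j`. -/
theorem crossEdges_card_le_of_minimal_yMax_attained {V : Type*} [Finite V]
    (G : SimpleGraph V) (hG : G.Connected)
    (A : Set (Sym2 V)) (hA : A ⊆ G.edgeSet) (hy : yMax G = yVal G A)
    (hmin : ∀ B ⊆ G.edgeSet, yMax G = yVal G B → A.ncard ≤ B.ncard)
    (k : ℕ) (hk : 2 ≤ k)
    (F : Fin k → (G.deleteEdges A).ConnectedComponent) (hF : Function.Injective F) :
    ({e : Sym2 V | ∃ i j : Fin k, i ≠ j ∧
        ∃ u ∈ (F i).supp, ∃ v ∈ (F j).supp, G.Adj u v ∧ e = s(u, v)}.ncard ≤ 2 * k - 3) ∧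
    ∀ i j : Fin k, i ≠ j →
      ({e : Sym2 V | ∃ u ∈ (F i).supp, ∃ v ∈ (F j).supp,
          G.Adj u v ∧ e = s(u, v)}.ncard ≤ 1) := by
  refine ⟨key G A hA hy hmin k hk F hF, ?_⟩
  intro i j hij
  set F' : Fin 2 → (G.deleteEdges A).ConnectedComponent := ![F i, F j] with hF'
  have hinj' : Function.Injective F' := by
    intro a b hab
    fin_cases a <;> fin_cases b <;> first
      | rfl
      | exact absurd (hF (by simpa [hF'] using hab)) hij
      | exact absurd (hF (by simpa [hF'] using hab)).symm hij
  have hkey := key G A hA hy hmin 2 le_rfl F' hinj'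
  have hsub : {e : Sym2 V | ∃ u ∈ (F i).supp, ∃ v ∈ (F j).supp, G.Adj u v ∧ e = s(u, v)} ⊆
      {e : Sym2 V | ∃ a b : Fin 2, a ≠ b ∧
        ∃ u ∈ (F' a).supp, ∃ v ∈ (F' b).supp, G.Adj u v ∧ e = s(u, v)} := by
    rintro e ⟨u, hu, v, hv, hadj, rfl⟩
    exact ⟨0, 1, by decide, u, by simpa [hF'] using hu, v, by simpa [hF'] using hv, hadj, rfl⟩
  calc _ ≤ _ := Set.ncard_le_ncard hsub (Set.toFinite _)
  _ ≤ 2 * 2 - 3 := hkey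
  _ = 1 := rfl
end

section
/- Let G be a 2-edge-connected finite simple graph and let A be an edge subset of minimum cardinality among those satisfying y_G(A) = y_G, where y_G ≥ 2. Then y_G ≤ c(G − A) − 1. -/
open SimpleGraph

/-- A finite simple graph is `k`-edge-connected if it has at least two vertices and removing
fewer than `k` edges leaves it connected. -/
def EdgeConnected {V : Type*} (G : SimpleGraph V) (k : ℕ) : Prop :=
  1 < Nat.card V ∧ ∀ A ⊆ G.edgeSet, A.ncard < k → (G.deleteEdges A).Connected

lemma numComp_eq_one_of_connected {V : Type*} [Finite V] {G : SimpleGraph V}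
    (h : G.Connected) : numComp G = 1 := by
  have hs : Subsingleton G.ConnectedComponent := h.preconnected.subsingleton_connectedComponent
  have hn : Nonempty G.ConnectedComponent := by
    obtain ⟨v⟩ := h.nonempty
    exact ⟨G.connectedComponentMk v⟩
  exact Nat.card_eq_one_iff_unique.mpr ⟨hs, hn⟩

lemma reach_delete_aux {V : Type*} {K : SimpleGraph V} {a b : V} :
    ∀ {u v : V}, K.Reachable u v →
      (K.deleteEdges {s(a,b)}).Reachable u v ∨
      ((K.deleteEdges {s(a,b)}).Reachable u a ∧ (K.deleteEdges {s(a,b)}).Reachable b v) ∨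
      ((K.deleteEdges {s(a,b)}).Reachable u b ∧ (K.deleteEdges {s(a,b)}).Reachable a v) := by
  intro u v huv
  obtain ⟨w⟩ := huv
  induction w with
  | nil => exact Or.inl (Reachable.refl _)
  | @cons u x v h p ih =>
    by_cases he : s(u, x) = s(a, b)
    · rw [Sym2.eq_iff] at he
      rcases he with ⟨rfl, rfl⟩ | ⟨rfl, rfl⟩
      · rcases ih with h1 | ⟨h1, h2⟩ | ⟨h1, h2⟩
        · exact Or.inr (Or.inl ⟨Reachable.refl _, h1⟩)
        · exact Or.inr (Or.inl ⟨Reachable.refl _, h2⟩)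
        · exact Or.inl h2
      · rcases ih with h1 | ⟨h1, h2⟩ | ⟨h1, h2⟩
        · exact Or.inr (Or.inr ⟨Reachable.refl _, h1⟩)
        · exact Or.inl h2
        · exact Or.inr (Or.inr ⟨Reachable.refl _, h2⟩)
    · have hadj : (K.deleteEdges {s(a,b)}).Adj u x := by
        rw [deleteEdges_adj]
        exact ⟨h, by simpa using he⟩
      rcases ih with h1 | ⟨h1, h2⟩ | ⟨h1, h2⟩
      · exact Or.inl (hadj.reachable.trans h1)
      · exact Or.inr (Or.inl ⟨hadj.reachable.trans h1, h2⟩)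
      · exact Or.inr (Or.inr ⟨hadj.reachable.trans h1, h2⟩)

lemma numComp_deleteEdges_single_le {V : Type*} [Finite V] (K : SimpleGraph V) (e : Sym2 V) :
    numComp (K.deleteEdges {e}) ≤ numComp K + 1 := by
  classical
  induction e using Sym2.ind with
  | _ a b =>
  set K' := K.deleteEdges {s(a,b)} with hK'
  let f : K'.ConnectedComponent → K.ConnectedComponent :=
    ConnectedComponent.map (Hom.ofLE (deleteEdges_le _))
  let g : K'.ConnectedComponent → K.ConnectedComponent ⊕ Unit := fun c =>
    if c = K'.connectedComponentMk b then Sum.inr () else Sum.inl (f c)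
  have hg : Function.Injective g := by
    intro c1 c2 hgc
    by_cases h1 : c1 = K'.connectedComponentMk b <;>
      by_cases h2 : c2 = K'.connectedComponentMk b
    · rw [h1, h2]
    · simp only [g, if_pos h1, if_neg h2] at hgc; exact absurd hgc (by simp)
    · simp only [g, if_neg h1, if_pos h2] at hgc; exact absurd hgc (by simp)
    · simp only [g, if_neg h1, if_neg h2, Sum.inl.injEq] at hgc
      obtain ⟨u, rfl⟩ := c1.exists_rep
      obtain ⟨v, rfl⟩ := c2.exists_rep
      have hr : K.Reachable u v := ConnectedComponent.exact hgc
      rcases reach_delete_aux (a := a) (b := b) hr with hr' | ⟨hr1, hr2⟩ | ⟨hr1, hr2⟩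
      · exact ConnectedComponent.sound hr'
      · exact absurd (ConnectedComponent.sound hr2.symm) h2
      · exact absurd (ConnectedComponent.sound hr1) h1
  have := Nat.card_le_card_of_injective g hg
  simpa [numComp, Nat.card_sum] using this

lemma numComp_deleteEdges_le {V : Type*} [Finite V] (G : SimpleGraph V)
    (hc : G.Connected) (B : Set (Sym2 V)) :
    numComp (G.deleteEdges B) ≤ B.ncard + 1 := by
  refine Set.Finite.induction_on
    (motive := fun B _ => numComp (G.deleteEdges B) ≤ B.ncard + 1) B (Set.toFinite B) ?_ ?_
  · simp [deleteEdges_empty, numComp_eq_one_of_connected hc]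
  · intro e B heB hfin ih
    have hrw : G.deleteEdges (insert e B) = (G.deleteEdges B).deleteEdges {e} := by
      rw [deleteEdges_deleteEdges, Set.union_singleton]
    rw [hrw, Set.ncard_insert_of_notMem heB hfin]
    calc numComp ((G.deleteEdges B).deleteEdges {e}) ≤ numComp (G.deleteEdges B) + 1 :=
          numComp_deleteEdges_single_le _ _
      _ ≤ B.ncard + 1 + 1 := by omega

lemma no_tight_cut {V : Type*} [Finite V] (G : SimpleGraph V) (hG : EdgeConnected G 2)
    (hc : G.Connected) :
    ∀ n, 1 ≤ n → ∀ B ⊆ G.edgeSet, B.ncard = n →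
      numComp (G.deleteEdges B) = n + 1 → False := by
  intro n
  induction n with
  | zero => omega
  | succ n ih =>
    intro _ B hB hcard hcomp
    rcases Nat.eq_zero_or_pos n with rfl | hn
    · have hconn := hG.2 B hB (by omega)
      have := numComp_eq_one_of_connected hconn
      omega
    · have hBne : B.Nonempty := by
        rw [← Set.ncard_pos (Set.toFinite B)]; omega
      obtain ⟨e, he⟩ := hBne
      have hB'card : (B \ {e}).ncard = n := by
        rw [Set.ncard_diff_singleton_of_mem he]; omega
      have hsplit : G.deleteEdges B = (G.deleteEdges (B \ {e})).deleteEdges {e} := by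
        rw [deleteEdges_deleteEdges, Set.diff_union_self,
          Set.union_eq_self_of_subset_right (Set.singleton_subset_iff.mpr he)]
      have hlow : numComp (G.deleteEdges B) ≤ numComp (G.deleteEdges (B \ {e})) + 1 := by
        rw [hsplit]; exact numComp_deleteEdges_single_le _ _
      have hhigh : numComp (G.deleteEdges (B \ {e})) ≤ n + 1 := by
        have := numComp_deleteEdges_le G hc (B \ {e})
        omega
      exact ih hn (B \ {e}) (fun x hx => hB hx.1) hB'card (by omega)

/-- If `G` is 2-edge-connected and `A` is a smallest edge subset with `y_G(A) = y_G ≥ 2`,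
then `y_G ≤ c(G - A) - 1`. -/
theorem yMax_le_numComp_sub_one_of_two_edgeConnected {V : Type*} [Finite V]
    (G : SimpleGraph V) (hG : EdgeConnected G 2)
    (A : Set (Sym2 V)) (hA : A ⊆ G.edgeSet) (hy : yMax G = yVal G A)
    (hmin : ∀ B ⊆ G.edgeSet, yMax G = yVal G B → A.ncard ≤ B.ncard)
    (h2 : 2 ≤ yMax G) :
    yMax G ≤ (numComp (G.deleteEdges A) : ℤ) - 1 := by
  have hconn : G.Connected := by
    have := hG.2 ∅ (Set.empty_subset _) (by simp)
    rwa [deleteEdges_empty] at this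
  by_contra hlt
  push_neg at hlt
  rw [hy] at hlt h2
  unfold yVal at hlt h2
  set c := numComp (G.deleteEdges A) with hc
  have hle : c ≤ A.ncard + 1 := numComp_deleteEdges_le G hconn A
  have hA1 : 1 ≤ A.ncard := by
    by_contra h
    have h0 : A.ncard = 0 := by omega
    have hAe : A = ∅ := (Set.ncard_eq_zero (Set.toFinite A)).mp h0
    have hone : c = 1 := by
      rw [hc, hAe, deleteEdges_empty]; exact numComp_eq_one_of_connected hconn
    omega
  have hceq : c = A.ncard + 1 := by
    have : (A.ncard : ℤ) < (c : ℤ) := by omega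
    omega
  exact no_tight_cut G hG hconn A.ncard hA1 A hA rfl (by omega)
end

section
/- If G is a connected finite simple graph of order n that is not a complete graph, then y_G ≤ min{n, 3·χ(G^c)}, where G^c is the complement of G and χ denotes the chromatic number. -/
open SimpleGraph

lemma reach_aux {V : Type*} (H : SimpleGraph V) (u v : V) {x y : V}
    (p : H.Walk x y) :
    (H.deleteEdges {s(u,v)}).Reachable x y ∨ (H.deleteEdges {s(u,v)}).Reachable x u ∨
      (H.deleteEdges {s(u,v)}).Reachable x v := by
  induction p with
  | nil => exact Or.inl (Reachable.refl _)
  | @cons a b c h p ih =>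
    by_cases he : s(a, b) = s(u, v)
    · rw [Sym2.eq_iff] at he
      rcases he with ⟨rfl, rfl⟩ | ⟨rfl, rfl⟩
      · exact Or.inr (Or.inl (Reachable.refl _))
      · exact Or.inr (Or.inr (Reachable.refl _))
    · have h' : (H.deleteEdges {s(u,v)}).Adj a b := by
        rw [deleteEdges_adj]; exact ⟨h, by simpa using he⟩
      rcases ih with hr | hr | hr
      · exact Or.inl (h'.reachable.trans hr)
      · exact Or.inr (Or.inl (h'.reachable.trans hr))
      · exact Or.inr (Or.inr (h'.reachable.trans hr))

lemma numComp_delete_single {V : Type*} [Finite V] (H : SimpleGraph V) (u v : V) :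
    Nat.card (H.deleteEdges {s(u,v)}).ConnectedComponent ≤ Nat.card H.ConnectedComponent + 1 := by
  classical
  set H' := H.deleteEdges {s(u,v)} with hH'
  let φ : H' →g H := Hom.ofLE (H.deleteEdges_le _)
  let f : H'.ConnectedComponent → H.ConnectedComponent ⊕ Unit := fun C =>
    if C = H'.connectedComponentMk v then Sum.inr () else Sum.inl (C.map φ)
  have hf : Function.Injective f := by
    intro C1 C2 hEq
    by_cases h1 : C1 = H'.connectedComponentMk v
    · by_cases h2 : C2 = H'.connectedComponentMk v
      · rw [h1, h2]
      · simp only [f, if_pos h1, if_neg h2] at hEq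
        exact absurd hEq (by simp)
    · by_cases h2 : C2 = H'.connectedComponentMk v
      · simp only [f, if_neg h1, if_pos h2] at hEq
        exact absurd hEq (by simp)
      · simp only [f, if_neg h1, if_neg h2, Sum.inl.injEq] at hEq
        obtain ⟨x1, rfl⟩ := C1.exists_rep
        obtain ⟨x2, rfl⟩ := C2.exists_rep
        have hreach : H.Reachable x1 x2 := ConnectedComponent.eq.mp hEq
        obtain ⟨p⟩ := hreach
        rcases reach_aux H u v p with hr | hr | hr
        · exact ConnectedComponent.sound hr
        · rcases reach_aux H u v p.reverse with hr2 | hr2 | hr2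
          · exact (ConnectedComponent.sound hr2).symm
          · exact ConnectedComponent.sound (hr.trans hr2.symm)
          · exact absurd (ConnectedComponent.sound hr2) h2
        · exact absurd (ConnectedComponent.sound hr) h1
  calc Nat.card H'.ConnectedComponent ≤ Nat.card (H.ConnectedComponent ⊕ Unit) :=
        Nat.card_le_card_of_injective f hf
    _ = Nat.card H.ConnectedComponent + 1 := by rw [Nat.card_sum]; simp

lemma numComp_delete_le {V : Type*} [Finite V] (G : SimpleGraph V) (A : Set (Sym2 V)) :
    Nat.card (G.deleteEdges A).ConnectedComponent ≤ Nat.card G.ConnectedComponent + A.ncard := by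
  classical
  have hA : A.Finite := Set.toFinite A
  refine Set.Finite.induction_on (motive := fun A _ => Nat.card (G.deleteEdges A).ConnectedComponent ≤ Nat.card G.ConnectedComponent + A.ncard) A hA (by simp) ?_
  intro e A heA hAfin ih
  have h1 : G.deleteEdges (insert e A) = (G.deleteEdges A).deleteEdges {e} := by
    rw [deleteEdges_deleteEdges]
    congr 1
    rw [Set.union_comm]
    exact (Set.insert_eq e A).symm
  obtain ⟨u, v⟩ := e
  calc Nat.card (G.deleteEdges (insert s(u,v) A)).ConnectedComponent
      = Nat.card ((G.deleteEdges A).deleteEdges {s(u,v)}).ConnectedComponent := by rw [h1]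
    _ ≤ Nat.card (G.deleteEdges A).ConnectedComponent + 1 := numComp_delete_single _ u v
    _ ≤ Nat.card G.ConnectedComponent + A.ncard + 1 := by omega
    _ = Nat.card G.ConnectedComponent + (insert s(u,v) A).ncard := by
        rw [Set.ncard_insert_of_notMem heA hAfin]; omega

lemma nat_aux (m : ℕ) : 4 * m ≤ (m * m - m) + 6 := by
  rcases Nat.lt_or_ge m 5 with h | h
  · interval_cases m <;> simp
  · have h2 : 5 * m ≤ m * m := Nat.mul_le_mul_right m h
    omega

lemma key_count {V : Type*} [Finite V] (G : SimpleGraph V) (A : Set (Sym2 V))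
    {k : ℕ} (col : (Gᶜ).Coloring (Fin k)) :
    2 * Nat.card (G.deleteEdges A).ConnectedComponent ≤ A.ncard + 3 * k := by
  classical
  cases isEmpty_or_nonempty V with
  | inl h =>
    haveI : IsEmpty (G.deleteEdges A).ConnectedComponent := by
      constructor; intro C; obtain ⟨v, _⟩ := C.exists_rep; exact h.elim v
    simp [Nat.card_of_isEmpty]
  | inr hne =>
  haveI : Fintype V := Fintype.ofFinite V
  set H := G.deleteEdges A with hH
  haveI : Fintype H.ConnectedComponent := Fintype.ofFinite _
  let M : Fin k → Finset H.ConnectedComponent := fun i =>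
    (Finset.univ.filter (fun v => col v = i)).image H.connectedComponentMk
  have hrex : ∀ i (C : H.ConnectedComponent), C ∈ M i →
      ∃ v, col v = i ∧ H.connectedComponentMk v = C := by
    intro i C hC
    simp only [M, Finset.mem_image, Finset.mem_filter] at hC
    obtain ⟨v, ⟨_, hv⟩, hvc⟩ := hC
    exact ⟨v, hv, hvc⟩
  let r : Fin k → H.ConnectedComponent → V := fun i C =>
    if h : ∃ v, col v = i ∧ H.connectedComponentMk v = C then h.choose else Classical.arbitrary V
  have hr : ∀ i C, C ∈ M i → col (r i C) = i ∧ H.connectedComponentMk (r i C) = C := by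
    intro i C hC
    have h := hrex i C hC
    simp only [r, dif_pos h]
    exact h.choose_spec
  let ord := Fintype.equivFin H.ConnectedComponent
  let D : Finset ((_ : Fin k) × H.ConnectedComponent × H.ConnectedComponent) :=
    Finset.univ.sigma (fun i => (M i).offDiag)
  have hAfin : A.Finite := Set.toFinite A
  let Af : Finset (Sym2 V) := hAfin.toFinset
  let F : ((_ : Fin k) × H.ConnectedComponent × H.ConnectedComponent) → Sym2 V × Bool :=
    fun x => (s(r x.1 x.2.1, r x.1 x.2.2), decide (ord x.2.1 < ord x.2.2))
  have hmem_iff : ∀ i C Dc, (⟨i, (C, Dc)⟩ : (_ : Fin k) × H.ConnectedComponent × H.ConnectedComponent) ∈ D ↔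
      C ∈ M i ∧ Dc ∈ M i ∧ C ≠ Dc := by
    intro i C Dc
    simp [D, Finset.mem_sigma, Finset.mem_offDiag]
  have hmaps : ∀ x ∈ D, F x ∈ Af ×ˢ (Finset.univ : Finset Bool) := by
    rintro ⟨i, C, Dc⟩ hx
    obtain ⟨hC, hD, hne2⟩ := (hmem_iff i C Dc).mp hx
    obtain ⟨hcolC, hmkC⟩ := hr i C hC
    obtain ⟨hcolD, hmkD⟩ := hr i Dc hD
    have hxne : r i C ≠ r i Dc := by
      intro h; apply hne2; rw [← hmkC, ← hmkD, h]
    have hadj : G.Adj (r i C) (r i Dc) := by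
      by_contra hna
      have hcadj : (Gᶜ).Adj (r i C) (r i Dc) := ⟨hxne, hna⟩
      exact col.valid hcadj (by rw [hcolC, hcolD])
    have hmemA : s(r i C, r i Dc) ∈ A := by
      by_contra hnA
      have hadj' : H.Adj (r i C) (r i Dc) := by
        rw [hH, deleteEdges_adj]; exact ⟨hadj, hnA⟩
      exact hne2 (by rw [← hmkC, ← hmkD]; exact ConnectedComponent.sound hadj'.reachable)
    simp only [F, Finset.mem_product, Finset.mem_univ, and_true]
    exact hAfin.mem_toFinset.mpr hmemA
  have hinj : Set.InjOn F D := by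
    rintro ⟨i, C, Dc⟩ hx ⟨i', C', D'⟩ hx' hFeq
    rw [Finset.mem_coe] at hx hx'
    obtain ⟨hC, hD, hne2⟩ := (hmem_iff i C Dc).mp hx
    obtain ⟨hC', hD', hne2'⟩ := (hmem_iff i' C' D').mp hx'
    obtain ⟨hcolC, hmkC⟩ := hr i C hC
    obtain ⟨hcolD, hmkD⟩ := hr i Dc hD
    obtain ⟨hcolC', hmkC'⟩ := hr i' C' hC'
    obtain ⟨hcolD', hmkD'⟩ := hr i' D' hD'
    simp only [F, Prod.mk.injEq] at hFeq
    obtain ⟨hedge, hbool⟩ := hFeq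
    rw [Sym2.eq_iff] at hedge
    rcases hedge with ⟨h1, h2⟩ | ⟨h1, h2⟩
    · have hii : i = i' := by rw [← hcolC, h1, hcolC']
      subst hii
      have e1 : C = C' := by rw [← hmkC, h1, hmkC']
      have e2 : Dc = D' := by rw [← hmkD, h2, hmkD']
      rw [e1, e2]
    · have hii : i = i' := by rw [← hcolC, h1, hcolD']
      subst hii
      have e1 : C = D' := by rw [← hmkC, h1, hmkD']
      have e2 : Dc = C' := by rw [← hmkD, h2, hmkC']
      subst e1; subst e2
      have hiff : (ord C < ord Dc) ↔ (ord Dc < ord C) := by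
        constructor
        · intro h; have := decide_eq_decide.mp hbool; exact this.mp h
        · intro h; exact (decide_eq_decide.mp hbool).mpr h
      have hordne : ord C ≠ ord Dc := fun h => hne2 (ord.injective h)
      rcases lt_or_gt_of_ne hordne with h | h
      · exact absurd (hiff.mp h) (lt_asymm h)
      · exact absurd (hiff.mpr h) (lt_asymm h)
  have hcard : D.card ≤ (Af ×ˢ (Finset.univ : Finset Bool)).card :=
    Finset.card_le_card_of_injOn F hmaps hinj
  have hDcard : D.card = ∑ i : Fin k, ((M i).card * (M i).card - (M i).card) := by
    rw [Finset.card_sigma]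
    exact Finset.sum_congr rfl fun i _ => Finset.offDiag_card (M i)
  have hPcard : (Af ×ˢ (Finset.univ : Finset Bool)).card = A.ncard * 2 := by
    rw [Finset.card_product]
    have : Af.card = A.ncard := by
      simp [Af, Set.ncard_eq_toFinset_card A hAfin]
    rw [this]
    simp
  have hcov : Fintype.card H.ConnectedComponent ≤ ∑ i : Fin k, (M i).card := by
    have hsub : (Finset.univ : Finset H.ConnectedComponent) ⊆ Finset.univ.biUnion M := by
      intro C _
      obtain ⟨v, hv⟩ := C.exists_rep
      refine Finset.mem_biUnion.mpr ⟨col v, Finset.mem_univ _, ?_⟩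
      simp only [M, Finset.mem_image, Finset.mem_filter]
      exact ⟨v, ⟨Finset.mem_univ _, rfl⟩, hv⟩
    calc Fintype.card H.ConnectedComponent = (Finset.univ : Finset H.ConnectedComponent).card :=
          (Finset.card_univ).symm
      _ ≤ (Finset.univ.biUnion M).card := Finset.card_le_card hsub
      _ ≤ ∑ i : Fin k, (M i).card := Finset.card_biUnion_le
  have hsumaux : ∑ i : Fin k, 4 * (M i).card ≤
      (∑ i : Fin k, ((M i).card * (M i).card - (M i).card)) + 6 * k := by
    calc ∑ i : Fin k, 4 * (M i).card
        ≤ ∑ i : Fin k, (((M i).card * (M i).card - (M i).card) + 6) :=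
          Finset.sum_le_sum fun i _ => nat_aux _
      _ = (∑ i : Fin k, ((M i).card * (M i).card - (M i).card)) + 6 * k := by
          rw [Finset.sum_add_distrib]; simp [Finset.card_univ, mul_comm]
  have hmul : ∑ i : Fin k, 4 * (M i).card = 4 * ∑ i : Fin k, (M i).card := by
    rw [Finset.mul_sum]
  rw [Nat.card_eq_fintype_card]
  omega

lemma numComp_eq_one {V : Type*} (G : SimpleGraph V) (hG : G.Connected) :
    Nat.card G.ConnectedComponent = 1 := by
  haveI : Subsingleton G.ConnectedComponent := by
    constructor
    intro a b
    obtain ⟨x, hx⟩ := a.exists_rep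
    obtain ⟨y, hy⟩ := b.exists_rep
    rw [← hx, ← hy]
    exact ConnectedComponent.sound (hG.preconnected x y)
  haveI : Nonempty G.ConnectedComponent := ⟨G.connectedComponentMk hG.nonempty.some⟩
  haveI : Inhabited G.ConnectedComponent := Classical.inhabited_of_nonempty ‹_›
  haveI : Unique G.ConnectedComponent := Unique.mk' _
  exact Nat.card_unique

/-- If `G` is a connected finite simple graph of order `n` that is not complete, then
`y_G ≤ min {n, 3 χ(Gᶜ)}`. -/
theorem yMax_le_of_connected_not_complete {V : Type*} [Finite V]
    (G : SimpleGraph V) (hG : G.Connected) (hnc : G ≠ ⊤)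
    (n : ℕ) (hn : Nat.card V = n) :
    yMax G ≤ (n : ℤ) ∧ yMax G ≤ 3 * ((Gᶜ).chromaticNumber.toNat : ℤ) := by
  have hnonempty : {y : ℤ | ∃ A ⊆ G.edgeSet, yVal G A = y}.Nonempty :=
    ⟨yVal G ∅, ∅, Set.empty_subset _, rfl⟩
  obtain ⟨col⟩ := (Gᶜ).colorable_chromaticNumber_of_fintype
  set k := (Gᶜ).chromaticNumber.toNat with hk
  constructor
  · apply csSup_le hnonempty
    rintro y ⟨A, hA, rfl⟩
    have h1 : numComp (G.deleteEdges A) ≤ n := by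
      rw [← hn]
      exact Nat.card_le_card_of_surjective (G.deleteEdges A).connectedComponentMk
        (fun C => C.exists_rep)
    have h2 : numComp (G.deleteEdges A) ≤ 1 + A.ncard := by
      have := numComp_delete_le G A
      rw [show Nat.card G.ConnectedComponent = 1 from numComp_eq_one G hG] at this
      unfold numComp
      omega
    unfold yVal
    have h1' : (numComp (G.deleteEdges A) : ℤ) ≤ n := by exact_mod_cast h1
    have h2' : (numComp (G.deleteEdges A) : ℤ) ≤ 1 + A.ncard := by exact_mod_cast h2
    linarith
  · apply csSup_le hnonempty
    rintro y ⟨A, hA, rfl⟩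
    have h3 : 2 * numComp (G.deleteEdges A) ≤ A.ncard + 3 * k := key_count G A col
    have h3' : 2 * (numComp (G.deleteEdges A) : ℤ) ≤ A.ncard + 3 * k := by exact_mod_cast h3
    unfold yVal
    linarith
end
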